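/- For every natural number n and nonnegative integer m, the coefficient of z^m in the formal power series (1+y)^{n+1}/(1 - \lambda y), where z = y/(1+y)^{\lambda+1} (i.e., y is the formal power series inverse), equals binomial(n + (\lambda+1)m, m). -/

import Mathlib

open PowerSeries

private def fussC (lam n : ℕ) : ℕ → ℚ
  | 0 => 1
  | (k+1) => ((n + (lam+1)*(k+1)).choose (k+1) : ℚ)
      - ((lam : ℚ)+1) * ((n + lam + (lam+1)*k).choose k : ℚ)

private lemma absorbQ (M k : ℕ) :
    ((k:ℚ)+1) * (((M+1).choose (k+1) : ℕ) : ℚ) = ((M:ℚ)+1) * ((M.choose k : ℕ) : ℚ) := by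
  have h := Nat.add_one_mul_choose_eq M k
  have h2 := congrArg (Nat.cast (R := ℚ)) h
  push_cast at h2
  linarith

private lemma fuss_zero (lam k : ℕ) : fussC lam 0 (k+1) = 0 := by
  simp only [fussC]
  have e1 : 0 + (lam+1)*(k+1) = (0 + lam + (lam+1)*k) + 1 := by ring
  rw [e1]
  have h := absorbQ (0 + lam + (lam+1)*k) k
  have e2 : ((0 + lam + (lam+1)*k : ℕ) : ℚ) + 1 = ((lam:ℚ)+1)*((k:ℚ)+1) := by push_cast; ring
  rw [e2] at h
  have hk : ((k:ℚ)+1) ≠ 0 := by positivity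
  apply mul_left_cancel₀ hk
  linear_combination h

private lemma fuss_rec (lam n k : ℕ) :
    (((n:ℚ)+lam+1)*((k:ℚ)+1)) * fussC lam (n+1) (k+1)
      = (((n:ℚ)+1)*((n:ℚ)+((lam:ℚ)+1)*((k:ℚ)+1))) * fussC lam (n+lam+1) k := by
  cases k with
  | zero =>
      simp only [fussC]
      norm_num [Nat.choose_one_right]
      ring
  | succ j =>
      simp only [fussC]
      have e1 : n+1 + (lam+1)*(j+1+1) = (n+2*lam+1+(lam+1)*j) + 1 + 1 := by ring
      have e2 : n+1 + lam + (lam+1)*(j+1) = (n+2*lam+1+(lam+1)*j) + 1 := by ring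
      have e3 : n+lam+1 + (lam+1)*(j+1) = (n+2*lam+1+(lam+1)*j) + 1 := by ring
      have e4 : n+lam+1 + lam + (lam+1)*j = n+2*lam+1+(lam+1)*j := by ring
      rw [e1, e2, e3, e4]
      set P := n+2*lam+1+(lam+1)*j with hP
      have h1 := absorbQ (P+1) (j+1)
      have h2 := absorbQ P j
      have hPc : ((P:ℕ):ℚ) = (n:ℚ)+2*lam+1+((lam:ℚ)+1)*j := by rw [hP]; push_cast; ring
      push_cast at h1 h2 ⊢
      rw [hPc] at h1 h2
      linear_combination ((n:ℚ)+lam+1) * h1 - ((n:ℚ)+1)*((lam:ℚ)+1) * h2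

/-- Σ_{k≥0} C(n+(λ+1)k, k) z^k = (1+y)^{n+1}/(1-λ y), where y = z(1+y)^{λ+1}. -/
theorem coeff_lagrange_family (lam n : ℕ) (y : PowerSeries ℚ)
    (h0 : PowerSeries.constantCoeff y = 0)
    (hy : y = PowerSeries.X * (1 + y) ^ (lam + 1)) :
    (PowerSeries.mk fun k => ((n + (lam + 1) * k).choose k : ℚ)) *
      (1 - (lam : PowerSeries ℚ) * y) = (1 + y) ^ (n + 1) := by
  -- constant coefficients of powers of (1+y)
  have hφ0 : ∀ m : ℕ, coeff 0 ((1+y)^m) = 1 := by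
    intro m
    rw [coeff_zero_eq_constantCoeff, map_pow, map_add, map_one, h0, add_zero, one_pow]
  -- derivative of powers
  have hdy1 : d⁄dX ℚ (1+y) = d⁄dX ℚ y := by
    rw [map_add]
    simp
  have hpow : ∀ m : ℕ, d⁄dX ℚ ((1+y)^(m+1)) = C ((m:ℚ)+1) * ((1+y)^m * d⁄dX ℚ y) := by
    intro m
    rw [Derivation.leibniz_pow, hdy1, Nat.add_sub_cancel, smul_eq_mul, nsmul_eq_mul,
      ← map_natCast (C (R := ℚ)) (m+1)]
    push_cast
    ring
  -- coefficient identity from derivative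
  have hstar : ∀ m k : ℕ, ((k:ℚ)+1) * coeff (k+1) ((1+y)^(m+1))
      = ((m:ℚ)+1) * coeff k ((1+y)^m * d⁄dX ℚ y) := by
    intro m k
    have h := coeff_derivative ((1+y)^(m+1)) k
    rw [hpow m, coeff_C_mul] at h
    linarith
  -- key functional equation multiplied by (1+y)^m
  have hDy : d⁄dX ℚ y = (1+y)^(lam+1) + C ((lam:ℚ)+1) * (X * ((1+y)^lam * d⁄dX ℚ y)) := by
    conv_lhs => rw [hy]
    rw [Derivation.leibniz, derivative_X, hpow lam, smul_eq_mul, smul_eq_mul]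
    ring
  have hkey : ∀ m : ℕ, (1+y)^m * d⁄dX ℚ y
      = (1+y)^(m+lam+1) + C ((lam:ℚ)+1) * (X * ((1+y)^(m+lam) * d⁄dX ℚ y)) := by
    intro m
    conv_lhs => rw [hDy]
    ring
  -- the master numeric recursion for coefficients of powers of (1+y)
  have hF3 : ∀ m k : ℕ, (((m:ℚ)+lam+1)*((k:ℚ)+1)) * coeff (k+1) ((1+y)^(m+1))
      = (((m:ℚ)+1)*((m:ℚ)+((lam:ℚ)+1)*((k:ℚ)+1))) * coeff k ((1+y)^(m+lam+1)) := by
    intro m k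
    have ha := hstar m k
    have hb := congrArg (coeff k) (hkey m)
    rw [map_add, coeff_C_mul] at hb
    cases k with
    | zero =>
        rw [coeff_zero_X_mul, mul_zero, add_zero, hφ0] at hb
        rw [hφ0]
        push_cast at ha hb ⊢
        linear_combination ((m:ℚ)+lam+1) * ha + ((m:ℚ)+1)*((m:ℚ)+lam+1) * hb
    | succ j =>
        rw [coeff_succ_X_mul] at hb
        have hc := hstar (m+lam) j
        push_cast at ha hb hc ⊢
        linear_combination ((m:ℚ)+lam+1) * ha + ((m:ℚ)+1)*((m:ℚ)+lam+1) * hb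
          - ((m:ℚ)+1)*((lam:ℚ)+1) * hc
  -- coefficients of powers of (1+y) are the Fuss-Catalan numbers
  have hmain : ∀ k m : ℕ, coeff k ((1+y)^m) = fussC lam m k := by
    intro k
    induction k with
    | zero =>
        intro m
        rw [hφ0]
        rfl
    | succ j ih =>
        intro m
        match m with
        | 0 =>
            rw [pow_zero, fuss_zero]
            simp
        | (m+1) =>
            have h1 := hF3 m j
            have h2 := fuss_rec lam m j
            have h3 := ih (m+lam+1)
            rw [h3] at h1
            have hne : (((m:ℚ)+lam+1)*((j:ℚ)+1)) ≠ 0 := by positivity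
            apply mul_left_cancel₀ hne
            linear_combination h1 - h2
  have hFuPhi : ∀ m : ℕ, (mk (fussC lam m) : ℚ⟦X⟧) = (1+y)^m := by
    intro m
    ext1 k
    rw [coeff_mk]
    exact (hmain k m).symm
  -- the family of binomial series
  set F : ℕ → ℚ⟦X⟧ := fun m => mk fun k => ((m + (lam+1)*k).choose k : ℚ) with hF
  have hg1 : ∀ m : ℕ, F m = mk (fussC lam m) + C ((lam:ℚ)+1) * (X * F (m+lam)) := by
    intro m
    ext1 k
    rw [map_add, coeff_mk, coeff_C_mul, hF]
    cases k with
    | zero =>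
        rw [coeff_zero_X_mul, mul_zero, add_zero, coeff_mk]
        simp [fussC]
    | succ j =>
        rw [coeff_succ_X_mul, coeff_mk, coeff_mk]
        simp only [fussC]
        ring
  have hg2 : ∀ m : ℕ, (1+y)^(m+1) = (1+y)^m * (1 - (lam : ℚ⟦X⟧) * y)
      + C ((lam:ℚ)+1) * (X * (1+y)^(m+lam+1)) := by
    intro m
    have hXy : X * (1+y)^(m+lam+1) = y * (1+y)^m := by
      calc X * (1+y)^(m+lam+1) = (X*(1+y)^(lam+1)) * (1+y)^m := by ring
      _ = y * (1+y)^m := by rw [← hy]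
    have hlc : (C ((lam:ℚ)+1)) = (lam : ℚ⟦X⟧) + 1 := by
      rw [map_add, map_one, map_natCast]
    rw [hXy, hlc]
    ring
  have hE : ∀ m : ℕ, F m * (1 - (lam : ℚ⟦X⟧) * y) - (1+y)^(m+1)
      = C ((lam:ℚ)+1) * (X * (F (m+lam) * (1 - (lam : ℚ⟦X⟧) * y) - (1+y)^(m+lam+1))) := by
    intro m
    rw [hg1 m, hg2 m, hFuPhi m]
    ring
  have hEcoeff : ∀ k m : ℕ, coeff k (F m * (1 - (lam : ℚ⟦X⟧) * y) - (1+y)^(m+1)) = 0 := by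
    intro k
    induction k with
    | zero =>
        intro m
        have h := congrArg (coeff 0) (hE m)
        rw [coeff_C_mul, coeff_zero_X_mul, mul_zero] at h
        exact h
    | succ j ih =>
        intro m
        have h := congrArg (coeff (j+1)) (hE m)
        rw [coeff_C_mul, coeff_succ_X_mul, ih (m+lam), mul_zero] at h
        exact h
  have hfin : F n * (1 - (lam : ℚ⟦X⟧) * y) - (1+y)^(n+1) = 0 := by
    ext1 k
    rw [map_zero]
    exact hEcoeff k n
  have := sub_eq_zero.mp hfin
  rw [hF] at this
  exact this
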